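/- There exists a constant $C > 0$ such that for every positive integer $n$, every $x$ in the standard 2-simplex, and $i \in \{1,2\}$, the second moment of the Meyer-König-Zeller-Kantorovič operator satisfies $K_n((u_i - x_i)^2; x) \leq C/n$. -/

import Mathlib

open MeasureTheory Real Set

noncomputable section
open Classical

/-- The standard 2-simplex. -/
def simplex2 : Set (ℝ × ℝ) := {x | 0 ≤ x.1 ∧ 0 ≤ x.2 ∧ x.1 + x.2 ≤ 1}

/-- Meyer-König-Zeller basis functions. -/
def ptil (n k1 k2 : ℕ) (x : ℝ × ℝ) : ℝ :=
  ((n + k1 + k2).factorial : ℝ) / ((n.factorial : ℝ) * k1.factorial * k2.factorial) *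
    x.1 ^ k1 * x.2 ^ k2 * (1 - x.1 - x.2) ^ (n + 1)

/-- The constants `c_{n,k1,k2}`. -/
def cMKZ (n k1 k2 : ℕ) : ℝ :=
  (((n : ℝ) + k1 + k2) ^ 2 * ((n : ℝ) + k1 + k2 + 1) ^ 2) / (((n : ℝ) + k1) * ((n : ℝ) + k2))

/-- The rectangles `△_{k1,k2}`. -/
def triRect (n k1 k2 : ℕ) : Set (ℝ × ℝ) :=
  Icc ((k1 : ℝ) / ((n : ℝ) + k1 + k2)) (((k1 : ℝ) + 1) / ((n : ℝ) + k1 + k2 + 1)) ×ˢ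
  Icc ((k2 : ℝ) / ((n : ℝ) + k1 + k2)) (((k2 : ℝ) + 1) / ((n : ℝ) + k1 + k2 + 1))

/-- Meyer-König-Zeller-Kantorovič operator. -/
def KMKZ (n : ℕ) (f : ℝ × ℝ → ℝ) (x : ℝ × ℝ) : ℝ :=
  ∑' k1 : ℕ, ∑' k2 : ℕ, ptil n k1 k2 x * cMKZ n k1 k2 * ∫ u in triRect n k1 k2, f u

/-- Bivariate Bernstein basis polynomials, with the convention that the value is `0`
whenever `k < 0`, `l < 0` or `k + l > m`. -/
def pB (m : ℕ) (k l : ℤ) (x : ℝ × ℝ) : ℝ :=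
  if 0 ≤ k ∧ 0 ≤ l ∧ k + l ≤ (m : ℤ) then
    ((m.factorial : ℝ) /
        ((k.toNat.factorial : ℝ) * l.toNat.factorial * (m - k.toNat - l.toNat).factorial)) *
      x.1 ^ k.toNat * x.2 ^ l.toNat * (1 - x.1 - x.2) ^ (m - k.toNat - l.toNat)
  else 0

/-- Stancu basis functions. -/
def bStancu (n k l s : ℕ) (x : ℝ × ℝ) : ℝ :=
  (1 - x.1 - x.2) * pB (n - s) k l x + x.1 * pB (n - s) ((k : ℤ) - s) l x +
    x.2 * pB (n - s) k ((l : ℤ) - s) x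

/-- The squares `I_{n,k,l}`. -/
def Isq (n k l : ℕ) : Set (ℝ × ℝ) :=
  Icc ((k : ℝ) / ((n : ℝ) + 2)) (((k : ℝ) + 1) / ((n : ℝ) + 2)) ×ˢ
  Icc ((l : ℝ) / ((n : ℝ) + 2)) (((l : ℝ) + 1) / ((n : ℝ) + 2))

/-- Stancu-Kantorovič operator. -/
def KStancu (n s : ℕ) (f : ℝ × ℝ → ℝ) (x : ℝ × ℝ) : ℝ :=
  ∑ k ∈ Finset.range (n + 1), ∑ l ∈ Finset.range (n + 1 - k),
    bStancu n k l s x * ((n : ℝ) + 2) ^ 2 * ∫ u in Isq n k l, f u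

/-- `Φ` is an N-function. -/
structure IsNFunction (Φ : ℝ → ℝ) : Prop where
  continuous : Continuous Φ
  convex : ConvexOn ℝ (Ici 0) Φ
  zero : Φ 0 = 0
  nonneg : ∀ u, 0 ≤ Φ u
  small : Filter.Tendsto (fun u => Φ u / u) (nhdsWithin 0 (Ioi 0)) (nhds 0)
  large : Filter.Tendsto (fun u => Φ u / u) Filter.atTop Filter.atTop

/-- The `Δ₂` condition for `Φ`. -/
def DeltaTwo (Φ : ℝ → ℝ) : Prop :=
  ∃ c u₀ : ℝ, 0 ≤ u₀ ∧ ∀ u, u₀ ≤ u → Φ (2 * u) ≤ c * Φ u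

/-- The Orlicz norm on the simplex, via the infimum formula. -/
def orliczNorm (Φ : ℝ → ℝ) (f : ℝ × ℝ → ℝ) : ℝ :=
  sInf {y | ∃ α : ℝ, 0 < α ∧ y = (1 / α) * (1 + ∫ x in simplex2, Φ (α * |f x|))}

/-- Membership in the Orlicz space `L_Φ^*(△)`. -/
def MemOrlicz (Φ : ℝ → ℝ) (f : ℝ × ℝ → ℝ) : Prop :=
  AEStronglyMeasurable f (volume.restrict simplex2) ∧
    ∃ α : ℝ, 0 < α ∧ IntegrableOn (fun x => Φ (α * |f x|)) simplex2

/-- Extension of `f` from the simplex to `ℝ²`: by `f(x) = f(1-x)` on `[0,1]²`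
and then `1`-periodically. -/
def extendF (f : ℝ × ℝ → ℝ) (x : ℝ × ℝ) : ℝ :=
  if (Int.fract x.1, Int.fract x.2) ∈ simplex2 then f (Int.fract x.1, Int.fract x.2)
  else f (1 - Int.fract x.1, 1 - Int.fract x.2)

/-- The Steklov mean `f_r`. -/
def steklov (f : ℝ × ℝ → ℝ) (r : ℝ) (x : ℝ × ℝ) : ℝ :=
  (1 / r ^ 4) * ∫ u in (Icc (-(r / 2)) (r / 2) ×ˢ Icc (-(r / 2)) (r / 2)),
    ∫ v in (Icc (-(r / 2)) (r / 2) ×ˢ Icc (-(r / 2)) (r / 2)), f (x + u + v)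

/-- The second-order modulus of smoothness in the Orlicz norm. -/
def modulus2 (Φ : ℝ → ℝ) (f : ℝ × ℝ → ℝ) (r : ℝ) : ℝ :=
  sSup {y | ∃ h : ℝ × ℝ, Real.sqrt (h.1 ^ 2 + h.2 ^ 2) = 1 ∧ ∃ t : ℝ, |t| ≤ r ∧
    y = orliczNorm Φ (fun x => f (x + t • h) + f (x - t • h) - 2 * f x)}

/-- First partial derivative in the first variable. -/
def d1 (g : ℝ × ℝ → ℝ) (x : ℝ × ℝ) : ℝ := deriv (fun t => g (t, x.2)) x.1

/-- First partial derivative in the second variable. -/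
def d2 (g : ℝ × ℝ → ℝ) (x : ℝ × ℝ) : ℝ := deriv (fun t => g (x.1, t)) x.2

lemma fact_ratio (n k1 k2 : ℕ) :
    ((n + k1 + k2).factorial : ℝ) / ((n.factorial : ℝ) * k1.factorial * k2.factorial)
      = ((n + k1).choose k1 : ℝ) * ((n + k1 + k2).choose k2 : ℝ) := by
  have h1 : (n + k1).choose k1 * n.factorial * k1.factorial = (n + k1).factorial :=
    Nat.add_choose_mul_factorial_mul_factorial n k1
  have h2 : (n + k1 + k2).choose k2 * (n + k1).factorial * k2.factorial
      = (n + k1 + k2).factorial := Nat.add_choose_mul_factorial_mul_factorial (n + k1) k2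
  have hnat : (n + k1).choose k1 * (n + k1 + k2).choose k2 *
      (n.factorial * k1.factorial * k2.factorial) = (n + k1 + k2).factorial := by
    calc (n + k1).choose k1 * (n + k1 + k2).choose k2 *
          (n.factorial * k1.factorial * k2.factorial)
        = (n + k1 + k2).choose k2 * ((n + k1).choose k1 * n.factorial * k1.factorial) *
            k2.factorial := by ring
      _ = (n + k1 + k2).choose k2 * (n + k1).factorial * k2.factorial := by rw [h1]
      _ = _ := h2
  have hpos : (0:ℝ) < (n.factorial : ℝ) * k1.factorial * k2.factorial := by positivity
  rw [div_eq_iff (ne_of_gt hpos)]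
  have := congrArg (Nat.cast : ℕ → ℝ) hnat
  push_cast at this
  linarith

/-- The basis term as a function on `ℕ × ℕ`. -/
def Pk (n : ℕ) (x1 x2 : ℝ) (k : ℕ × ℕ) : ℝ := ptil n k.1 k.2 (x1, x2)

lemma Pk_nonneg {n : ℕ} {x1 x2 : ℝ} (h1 : 0 ≤ x1) (h2 : 0 ≤ x2) (hs : x1 + x2 ≤ 1)
    (k : ℕ × ℕ) : 0 ≤ Pk n x1 x2 k := by
  have : (0:ℝ) ≤ 1 - x1 - x2 := by linarith
  unfold Pk ptil
  positivity

lemma hasSum_Pk (n : ℕ) {x1 x2 : ℝ} (h1 : 0 ≤ x1) (h2 : 0 ≤ x2) (hs : x1 + x2 < 1) :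
    HasSum (Pk n x1 x2) 1 := by
  have hx2 : x2 < 1 := by linarith
  have hx2' : ‖x2‖ < 1 := by rw [Real.norm_eq_abs, abs_of_nonneg h2]; exact hx2
  have h12 : (0:ℝ) < 1 - x2 := by linarith
  have hr0 : 0 ≤ x1 / (1 - x2) := div_nonneg h1 h12.le
  have hr : ‖x1 / (1 - x2)‖ < 1 := by
    rw [Real.norm_eq_abs, abs_of_nonneg hr0, div_lt_one h12]; linarith
  -- fiberwise sums
  set A : ℕ → ℝ := fun k1 => ((n + k1).choose k1 : ℝ) * x1 ^ k1 * (1 - x1 - x2) ^ (n + 1) *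
    (1 / (1 - x2) ^ (n + k1 + 1)) with hA
  have hfiber : ∀ k1 : ℕ, HasSum (fun k2 => Pk n x1 x2 (k1, k2)) (A k1) := by
    intro k1
    have base : HasSum (fun j : ℕ => ((j + (n + k1)).choose (n + k1) : ℝ) * x2 ^ j)
        (1 / (1 - x2) ^ (n + k1 + 1)) := hasSum_choose_mul_geometric_of_norm_lt_one _ hx2'
    have := base.mul_left (((n + k1).choose k1 : ℝ) * x1 ^ k1 * (1 - x1 - x2) ^ (n + 1))
    convert this using 2 with k2
    · rfl
    · unfold Pk ptil
      simp only
      rw [fact_ratio]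
      have : (n + k1 + k2).choose k2 = (k2 + (n + k1)).choose (n + k1) := by
        rw [show n + k1 + k2 = k2 + (n + k1) from by omega, Nat.choose_symm_add]
      rw [this]; ring
  -- outer sum
  have houter : HasSum A 1 := by
    have base : HasSum (fun k1 : ℕ => ((k1 + n).choose n : ℝ) * (x1 / (1 - x2)) ^ k1)
        (1 / (1 - (x1 / (1 - x2))) ^ (n + 1)) := hasSum_choose_mul_geometric_of_norm_lt_one _ hr
    have hS := base.mul_left ((1 - x1 - x2) ^ (n + 1) / (1 - x2) ^ (n + 1))
    have hnum : (0:ℝ) < 1 - x1 - x2 := by linarith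
    have hval : (1 - x1 - x2) ^ (n + 1) / (1 - x2) ^ (n + 1) *
        (1 / (1 - x1 / (1 - x2)) ^ (n + 1)) = 1 := by
      have h1s : (1:ℝ) - x1 / (1 - x2) = (1 - x1 - x2) / (1 - x2) := by
        field_simp
        ring
      rw [h1s, div_pow]
      exact mul_one_div_cancel (div_ne_zero (pow_ne_zero _ hnum.ne') (pow_ne_zero _ h12.ne'))
    have hfun : A = fun k1 => (1 - x1 - x2) ^ (n + 1) / (1 - x2) ^ (n + 1) *
        (((k1 + n).choose n : ℝ) * (x1 / (1 - x2)) ^ k1) := by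
      funext k1
      have hc : ((n + k1).choose k1 : ℝ) = ((k1 + n).choose n : ℝ) := by
        rw [show n + k1 = k1 + n from by omega, Nat.choose_symm_add]
      rw [hA]; simp only
      rw [hc, div_pow, pow_add]
      field_simp
      ring
    rw [hfun]
    convert hS using 1
    · rfl
    exact hval.symm
  -- assemble
  have hnn : 0 ≤ Pk n x1 x2 := fun k => Pk_nonneg h1 h2 hs.le k
  have hsummable : Summable (Pk n x1 x2) := by
    rw [summable_prod_of_nonneg hnn]
    refine ⟨fun k1 => (hfiber k1).summable, ?_⟩
    have : (fun k1 => ∑' k2, Pk n x1 x2 (k1, k2)) = A := by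
      funext k1; exact (hfiber k1).tsum_eq
    rw [this]; exact houter.summable
  have htsum : ∑' k, Pk n x1 x2 k = 1 := by
    rw [Summable.tsum_prod' hsummable fun k1 => (hfiber k1).summable]
    calc ∑' (k1) (k2), Pk n x1 x2 (k1, k2) = ∑' k1, A k1 := by
          congr 1; funext k1; exact (hfiber k1).tsum_eq
      _ = 1 := houter.tsum_eq
  exact htsum ▸ hsummable.hasSum

def eshift : ℕ × ℕ → ℕ × ℕ := fun k => (k.1 + 1, k.2)

lemma eshift_inj : Function.Injective eshift := by
  rintro ⟨a1, a2⟩ ⟨b1, b2⟩ h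
  simp only [eshift, Prod.mk.injEq] at h
  exact Prod.ext (by omega) h.2

lemma eshift_range {c : ℕ × ℕ} (hc : c ∉ Set.range eshift) : c.1 = 0 := by
  rcases c with ⟨c1, c2⟩
  cases c1 with
  | zero => rfl
  | succ m => exact absurd ⟨(m, c2), rfl⟩ hc

lemma ptil_shift (n k1 k2 : ℕ) (x1 x2 : ℝ) :
    ptil n (k1 + 1) k2 (x1, x2) * (((k1 : ℝ) + 1) / ((n : ℝ) + k1 + k2 + 1))
      = x1 * ptil n k1 k2 (x1, x2) := by
  have e1 : n + (k1 + 1) + k2 = (n + k1 + k2) + 1 := by omega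
  simp only [ptil, e1, Nat.factorial_succ]
  have hf0 : ((n + k1 + k2).factorial : ℝ) ≠ 0 := by
    exact_mod_cast (Nat.factorial_pos _).ne'
  have hf1 : ((n.factorial : ℝ)) ≠ 0 := by exact_mod_cast (Nat.factorial_pos _).ne'
  have hf2 : ((k1.factorial : ℝ)) ≠ 0 := by exact_mod_cast (Nat.factorial_pos _).ne'
  have hf3 : ((k2.factorial : ℝ)) ≠ 0 := by exact_mod_cast (Nat.factorial_pos _).ne'
  have hN1 : ((n : ℝ) + k1 + k2 + 1) ≠ 0 := by positivity
  push_cast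
  field_simp
  ring

lemma ptil_shift_sq (n k1 k2 : ℕ) (hn : 1 ≤ n) (x1 x2 : ℝ) :
    ptil n (k1 + 1) k2 (x1, x2) * ((((k1 : ℝ) + 1) / ((n : ℝ) + k1 + k2 + 1))) ^ 2
      = x1 * (ptil n k1 k2 (x1, x2) * ((k1 : ℝ) / ((n : ℝ) + k1 + k2)) +
          ptil n k1 k2 (x1, x2) *
            (((n : ℝ) + k2) / (((n : ℝ) + k1 + k2) * ((n : ℝ) + k1 + k2 + 1)))) := by
  have hn' : (1 : ℝ) ≤ (n : ℝ) := by exact_mod_cast hn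
  have hk1 : (0 : ℝ) ≤ (k1 : ℝ) := Nat.cast_nonneg _
  have hk2 : (0 : ℝ) ≤ (k2 : ℝ) := Nat.cast_nonneg _
  have hN : ((n : ℝ) + k1 + k2) ≠ 0 := by nlinarith
  have hN1 : ((n : ℝ) + k1 + k2 + 1) ≠ 0 := by nlinarith
  have hb : (((k1 : ℝ) + 1) / ((n : ℝ) + k1 + k2 + 1))
      = (k1 : ℝ) / ((n : ℝ) + k1 + k2)
        + ((n : ℝ) + k2) / (((n : ℝ) + k1 + k2) * ((n : ℝ) + k1 + k2 + 1)) := by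
    field_simp
    ring
  calc ptil n (k1 + 1) k2 (x1, x2) * ((((k1 : ℝ) + 1) / ((n : ℝ) + k1 + k2 + 1))) ^ 2
      = (ptil n (k1 + 1) k2 (x1, x2) * (((k1 : ℝ) + 1) / ((n : ℝ) + k1 + k2 + 1))) *
          (((k1 : ℝ) + 1) / ((n : ℝ) + k1 + k2 + 1)) := by ring
    _ = (x1 * ptil n k1 k2 (x1, x2)) * (((k1 : ℝ) + 1) / ((n : ℝ) + k1 + k2 + 1)) := by
          rw [ptil_shift]
    _ = _ := by rw [hb]; ring

lemma hasSum_F1 (n : ℕ) {x1 x2 : ℝ} (h1 : 0 ≤ x1) (h2 : 0 ≤ x2) (hs : x1 + x2 < 1) :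
    HasSum (fun k : ℕ × ℕ => Pk n x1 x2 k * ((k.1 : ℝ) / ((n : ℝ) + k.1 + k.2))) x1 := by
  have hP := hasSum_Pk n h1 h2 hs
  have hvan : ∀ c ∉ Set.range eshift,
      Pk n x1 x2 c * ((c.1 : ℝ) / ((n : ℝ) + c.1 + c.2)) = 0 := by
    intro c hc
    rw [eshift_range hc]
    simp
  have hcomp : ((fun k : ℕ × ℕ => Pk n x1 x2 k * ((k.1 : ℝ) / ((n : ℝ) + k.1 + k.2))) ∘ eshift)
      = fun k => x1 * Pk n x1 x2 k := by
    funext k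
    rcases k with ⟨k1, k2⟩
    simp only [Function.comp_apply, eshift, Pk]
    push_cast
    rw [show ((n : ℝ) + ((k1 : ℝ) + 1) + (k2 : ℝ)) = ((n : ℝ) + k1 + k2 + 1) from by ring]
    exact ptil_shift n k1 k2 x1 x2
  refine (eshift_inj.hasSum_iff hvan).mp ?_
  rw [hcomp]
  simpa using hP.mul_left x1

lemma hasSum_M (n : ℕ) (hn : 1 ≤ n) {x1 x2 : ℝ} (h1 : 0 ≤ x1) (h2 : 0 ≤ x2)
    (hs : x1 + x2 < 1) :
    ∃ E : ℝ, 0 ≤ E ∧ E ≤ 1 / ((n : ℝ) + 1) ∧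
      HasSum (fun k : ℕ × ℕ =>
        Pk n x1 x2 k * (((k.1 : ℝ) / ((n : ℝ) + k.1 + k.2)) - x1) ^ 2) (x1 * E) := by
  have hP := hasSum_Pk n h1 h2 hs
  have hF1 := hasSum_F1 n h1 h2 hs
  have hn' : (1 : ℝ) ≤ (n : ℝ) := by exact_mod_cast hn
  set R : ℕ × ℕ → ℝ := fun k =>
    Pk n x1 x2 k * (((n : ℝ) + k.2) / (((n : ℝ) + k.1 + k.2) * ((n : ℝ) + k.1 + k.2 + 1)))
    with hR
  have hPnn : ∀ k, 0 ≤ Pk n x1 x2 k := fun k => Pk_nonneg h1 h2 hs.le k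
  have hRnn : ∀ k, 0 ≤ R k := by
    intro k
    apply mul_nonneg (hPnn k)
    positivity
  have hRle : ∀ k, R k ≤ Pk n x1 x2 k * (1 / ((n : ℝ) + 1)) := by
    rintro ⟨k1, k2⟩
    apply mul_le_mul_of_nonneg_left _ (hPnn _)
    have hk1 : (0 : ℝ) ≤ (k1 : ℝ) := Nat.cast_nonneg _
    have hk2 : (0 : ℝ) ≤ (k2 : ℝ) := Nat.cast_nonneg _
    rw [div_le_div_iff₀ (by nlinarith) (by nlinarith)]
    nlinarith
  have hBsum : Summable (fun k : ℕ × ℕ => Pk n x1 x2 k * (1 / ((n : ℝ) + 1))) :=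
    hP.summable.mul_right _
  have hRsum : Summable R := Summable.of_nonneg_of_le hRnn hRle hBsum
  refine ⟨∑' k, R k, tsum_nonneg hRnn, ?_, ?_⟩
  · calc ∑' k, R k ≤ ∑' k, Pk n x1 x2 k * (1 / ((n : ℝ) + 1)) :=
          Summable.tsum_le_tsum hRle hRsum hBsum
      _ = 1 / ((n : ℝ) + 1) := by rw [tsum_mul_right, hP.tsum_eq, one_mul]
  · -- F2 has sum x1 * (x1 + E)
    have hF2 : HasSum (fun k : ℕ × ℕ =>
        Pk n x1 x2 k * (((k.1 : ℝ) / ((n : ℝ) + k.1 + k.2))) ^ 2) (x1 * (x1 + ∑' k, R k)) := by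
      have hvan : ∀ c ∉ Set.range eshift,
          Pk n x1 x2 c * (((c.1 : ℝ) / ((n : ℝ) + c.1 + c.2))) ^ 2 = 0 := by
        intro c hc
        rw [eshift_range hc]
        simp
      refine (eshift_inj.hasSum_iff hvan).mp ?_
      have hsum : HasSum (fun k : ℕ × ℕ =>
          x1 * (Pk n x1 x2 k * ((k.1 : ℝ) / ((n : ℝ) + k.1 + k.2)) + R k))
          (x1 * (x1 + ∑' k, R k)) := (hF1.add hRsum.hasSum).mul_left x1
      convert hsum using 1
      funext k
      rcases k with ⟨k1, k2⟩
      simp only [Function.comp_apply, eshift, Pk, hR]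
      push_cast
      rw [show ((n : ℝ) + ((k1 : ℝ) + 1) + (k2 : ℝ)) = ((n : ℝ) + k1 + k2 + 1) from by ring]
      exact ptil_shift_sq n k1 k2 hn x1 x2
    have hfin : HasSum (fun k : ℕ × ℕ =>
        Pk n x1 x2 k * (((k.1 : ℝ) / ((n : ℝ) + k.1 + k.2)) - x1) ^ 2)
        (x1 * (x1 + ∑' k, R k) - 2 * x1 * x1 + x1 ^ 2 * 1) := by
      have := (hF2.sub (hF1.mul_left (2 * x1))).add (hP.mul_left (x1 ^ 2))
      convert this using 1
      · rfl
      funext k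
      ring
    convert hfin using 1
    ring

def Tt (n : ℕ) (x1 x2 : ℝ) (k : ℕ × ℕ) : ℝ :=
  ptil n k.1 k.2 (x1, x2) * cMKZ n k.1 k.2 * ∫ u in triRect n k.1 k.2, (u.1 - x1) ^ 2

lemma triRect_meas (n k1 k2 : ℕ) : MeasurableSet (triRect n k1 k2) :=
  measurableSet_Icc.prod measurableSet_Icc

lemma Tt_nonneg {n : ℕ} {x1 x2 : ℝ} (h1 : 0 ≤ x1) (h2 : 0 ≤ x2) (hs : x1 + x2 ≤ 1)
    (k : ℕ × ℕ) : 0 ≤ Tt n x1 x2 k := by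
  refine mul_nonneg (mul_nonneg (Pk_nonneg h1 h2 hs k) ?_) ?_
  · unfold cMKZ; positivity
  · exact setIntegral_nonneg (triRect_meas n k.1 k.2) fun u _ => sq_nonneg _

set_option maxHeartbeats 1000000 in
lemma Tt_le {n : ℕ} (hn : 1 ≤ n) {x1 x2 : ℝ} (h1 : 0 ≤ x1) (h2 : 0 ≤ x2)
    (hs : x1 + x2 ≤ 1) (k : ℕ × ℕ) :
    Tt n x1 x2 k ≤ Pk n x1 x2 k *
      (2 * (1 / ((n : ℝ) + 1)) ^ 2 + 2 * (((k.1 : ℝ) / ((n : ℝ) + k.1 + k.2)) - x1) ^ 2) := by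
  rcases k with ⟨k1, k2⟩
  have hn' : (1 : ℝ) ≤ (n : ℝ) := by exact_mod_cast hn
  have hk1 : (0 : ℝ) ≤ (k1 : ℝ) := Nat.cast_nonneg _
  have hk2 : (0 : ℝ) ≤ (k2 : ℝ) := Nat.cast_nonneg _
  have hN : (0 : ℝ) < (n : ℝ) + k1 + k2 := by linarith
  have hN1 : (0 : ℝ) < (n : ℝ) + k1 + k2 + 1 := by linarith
  set a1 : ℝ := (k1 : ℝ) / ((n : ℝ) + k1 + k2) with ha1
  set b1 : ℝ := ((k1 : ℝ) + 1) / ((n : ℝ) + k1 + k2 + 1) with hb1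
  set a2 : ℝ := (k2 : ℝ) / ((n : ℝ) + k1 + k2) with ha2
  set b2 : ℝ := ((k2 : ℝ) + 1) / ((n : ℝ) + k1 + k2 + 1) with hb2
  have hlen1 : b1 - a1 = ((n : ℝ) + k2) / (((n : ℝ) + k1 + k2) * ((n : ℝ) + k1 + k2 + 1)) := by
    rw [hb1, ha1]; field_simp; ring
  have hlen2 : b2 - a2 = ((n : ℝ) + k1) / (((n : ℝ) + k1 + k2) * ((n : ℝ) + k1 + k2 + 1)) := by
    rw [hb2, ha2]; field_simp; ring
  have hlen1nn : 0 ≤ b1 - a1 := by rw [hlen1]; positivity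
  have hlen2nn : 0 ≤ b2 - a2 := by rw [hlen2]; positivity
  have hd1 : b1 - a1 ≤ 1 / ((n : ℝ) + 1) := by
    rw [hlen1, div_le_div_iff₀ (by positivity) (by linarith)]
    nlinarith
  set B : ℝ := 2 * (1 / ((n : ℝ) + 1)) ^ 2 + 2 * (a1 - x1) ^ 2 with hB
  have hbound : ∀ u ∈ triRect n k1 k2, ‖(u.1 - x1) ^ 2‖ ≤ B := by
    rintro ⟨u1, u2⟩ hu
    rw [triRect, Set.mem_prod] at hu
    obtain ⟨⟨hu1a, hu1b⟩, -⟩ := hu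
    rw [Real.norm_eq_abs, abs_of_nonneg (sq_nonneg _)]
    simp only at hu1a hu1b
    have h3 : u1 - a1 ≤ 1 / ((n : ℝ) + 1) := by
      have : u1 ≤ b1 := hu1b
      linarith
    have h4 : 0 ≤ u1 - a1 := by
      have : a1 ≤ u1 := hu1a
      linarith
    have h6 : (u1 - a1) ^ 2 ≤ (1 / ((n : ℝ) + 1)) ^ 2 := by nlinarith
    rw [hB]
    nlinarith [sq_nonneg (u1 - 2 * a1 + x1)]
  have hvol : volume (triRect n k1 k2)
      = ENNReal.ofReal (b1 - a1) * ENNReal.ofReal (b2 - a2) := by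
    rw [triRect, Measure.volume_eq_prod, Measure.prod_prod, Real.volume_Icc, Real.volume_Icc]
  have hvolfin : volume (triRect n k1 k2) < ⊤ := by
    rw [hvol]
    exact ENNReal.mul_lt_top ENNReal.ofReal_lt_top ENNReal.ofReal_lt_top
  have hint : (∫ u in triRect n k1 k2, (u.1 - x1) ^ 2) ≤ B * ((b1 - a1) * (b2 - a2)) := by
    have hnorm := norm_setIntegral_le_of_norm_le_const hvolfin hbound
    calc (∫ u in triRect n k1 k2, (u.1 - x1) ^ 2)
        ≤ ‖∫ u in triRect n k1 k2, (u.1 - x1) ^ 2‖ := le_abs_self _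
      _ ≤ B * (volume (triRect n k1 k2)).toReal := hnorm
      _ = B * ((b1 - a1) * (b2 - a2)) := by
          rw [hvol, ENNReal.toReal_mul, ENNReal.toReal_ofReal hlen1nn,
            ENNReal.toReal_ofReal hlen2nn]
  have hckey : cMKZ n k1 k2 * ((b1 - a1) * (b2 - a2)) = 1 := by
    have h7 : ((n : ℝ) + k1) ≠ 0 := by positivity
    have h8 : ((n : ℝ) + k2) ≠ 0 := by positivity
    rw [hlen1, hlen2]
    simp only [cMKZ]
    field_simp
  have hPc : 0 ≤ ptil n k1 k2 (x1, x2) * cMKZ n k1 k2 := by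
    refine mul_nonneg (Pk_nonneg h1 h2 hs (k1, k2)) ?_
    unfold cMKZ; positivity
  calc Tt n x1 x2 (k1, k2)
      = ptil n k1 k2 (x1, x2) * cMKZ n k1 k2 * ∫ u in triRect n k1 k2, (u.1 - x1) ^ 2 := rfl
    _ ≤ ptil n k1 k2 (x1, x2) * cMKZ n k1 k2 * (B * ((b1 - a1) * (b2 - a2))) :=
        mul_le_mul_of_nonneg_left hint hPc
    _ = ptil n k1 k2 (x1, x2) * B * (cMKZ n k1 k2 * ((b1 - a1) * (b2 - a2))) := by ring
    _ = Pk n x1 x2 (k1, k2) * B := by rw [hckey, Pk]; ring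
    _ = _ := by rw [hB, ha1]

lemma core (n : ℕ) (hn : 1 ≤ n) {x1 x2 : ℝ} (h1 : 0 ≤ x1) (h2 : 0 ≤ x2)
    (hs : x1 + x2 ≤ 1) :
    Summable (Tt n x1 x2) ∧ ∑' k, Tt n x1 x2 k ≤ 4 / n := by
  have hnR : (0 : ℝ) < n := by exact_mod_cast hn
  rcases eq_or_lt_of_le hs with heq | hlt
  · have hzero : Tt n x1 x2 = fun _ => 0 := by
      funext k
      simp [Tt, ptil, show (1 : ℝ) - x1 - x2 = 0 from by linarith]
    rw [hzero]
    refine ⟨summable_zero, ?_⟩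
    rw [tsum_zero]
    positivity
  · obtain ⟨E, hE0, hE1, hM⟩ := hasSum_M n hn h1 h2 hlt
    have hP := hasSum_Pk n h1 h2 hlt
    set G : ℕ × ℕ → ℝ := fun k => Pk n x1 x2 k *
      (2 * (1 / ((n : ℝ) + 1)) ^ 2 + 2 * (((k.1 : ℝ) / ((n : ℝ) + k.1 + k.2)) - x1) ^ 2)
      with hGdef
    have hG : HasSum G (2 * (1 / ((n : ℝ) + 1)) ^ 2 + 2 * (x1 * E)) := by
      have hsum := (hP.mul_left (2 * (1 / ((n : ℝ) + 1)) ^ 2)).add (hM.mul_left 2)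
      convert hsum using 1
      · rfl
      · funext k; rw [hGdef]; ring
      · ring
    have hTle : ∀ k, Tt n x1 x2 k ≤ G k := fun k => Tt_le hn h1 h2 hs k
    have hTnn : ∀ k, 0 ≤ Tt n x1 x2 k := fun k => Tt_nonneg h1 h2 hs k
    have hTsum : Summable (Tt n x1 x2) := Summable.of_nonneg_of_le hTnn hTle hG.summable
    refine ⟨hTsum, ?_⟩
    have hn' : (1 : ℝ) ≤ (n : ℝ) := by exact_mod_cast hn
    have hx1le : x1 ≤ 1 := by linarith
    have h0inv : (0 : ℝ) ≤ 1 / ((n : ℝ) + 1) := by positivity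
    have hinvle1 : 1 / ((n : ℝ) + 1) ≤ 1 := by rw [div_le_one (by linarith)]; linarith
    have hsq : (1 / ((n : ℝ) + 1)) ^ 2 ≤ 1 / ((n : ℝ) + 1) := by nlinarith
    have hx1E : x1 * E ≤ E := by nlinarith
    have hfrac : 4 / ((n : ℝ) + 1) ≤ 4 / (n : ℝ) := by
      rw [div_le_div_iff₀ (by linarith) hnR]
      linarith
    calc ∑' k, Tt n x1 x2 k ≤ ∑' k, G k := Summable.tsum_le_tsum hTle hTsum hG.summable
      _ = 2 * (1 / ((n : ℝ) + 1)) ^ 2 + 2 * (x1 * E) := hG.tsum_eq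
      _ ≤ 2 * (1 / ((n : ℝ) + 1)) + 2 * (1 / ((n : ℝ) + 1)) := by linarith
      _ = 4 / ((n : ℝ) + 1) := by ring
      _ ≤ 4 / (n : ℝ) := hfrac

lemma mkz_swap_integral (S T : Set ℝ) (g : ℝ → ℝ) :
    (∫ u : ℝ × ℝ in S ×ˢ T, g u.2) = ∫ u : ℝ × ℝ in T ×ˢ S, g u.1 := by
  have h1 := setIntegral_prod_mul (μ := (volume : Measure ℝ)) (ν := (volume : Measure ℝ))
    (fun _ : ℝ => (1 : ℝ)) g S T
  have h2 := setIntegral_prod_mul (μ := (volume : Measure ℝ)) (ν := (volume : Measure ℝ))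
    g (fun _ : ℝ => (1 : ℝ)) T S
  simp only [one_mul, mul_one] at h1 h2
  rw [Measure.volume_eq_prod, h1, h2, mul_comm]

lemma ptil_swap (n k1 k2 : ℕ) (x1 x2 : ℝ) : ptil n k1 k2 (x1, x2) = ptil n k2 k1 (x2, x1) := by
  simp only [ptil]
  rw [show n + k2 + k1 = n + k1 + k2 from by omega]
  ring

lemma cMKZ_swap (n k1 k2 : ℕ) : cMKZ n k1 k2 = cMKZ n k2 k1 := by
  simp only [cMKZ]; ring

lemma triRect_swap (n k1 k2 : ℕ) (z : ℝ) :
    (∫ u in triRect n k1 k2, (u.2 - z) ^ 2) = ∫ u in triRect n k2 k1, (u.1 - z) ^ 2 := by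
  simp only [triRect]
  rw [show ((n : ℝ) + k2 + k1) = ((n : ℝ) + k1 + k2) from by ring]
  exact mkz_swap_integral _ _ (fun t => (t - z) ^ 2)

theorem KMKZ_second_moment : ∃ C : ℝ, 0 < C ∧ ∀ n : ℕ, 0 < n → ∀ x ∈ simplex2,
    KMKZ n (fun u => (u.1 - x.1) ^ 2) x ≤ C / n ∧
    KMKZ n (fun u => (u.2 - x.2) ^ 2) x ≤ C / n := by

  refine ⟨4, by norm_num, ?_⟩
  intro n hn x hx
  obtain ⟨x1, x2⟩ := x
  obtain ⟨hx1, hx2, hxs⟩ := hx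
  dsimp only at hx1 hx2 hxs ⊢
  obtain ⟨hTsum, hTle⟩ := core n hn hx1 hx2 hxs
  constructor
  · have hfib : ∀ k1, Summable fun k2 => Tt n x1 x2 (k1, k2) := by
      intro k1
      have : Function.Injective (fun k2 : ℕ => ((k1, k2) : ℕ × ℕ)) := by
        intro a b h; simpa using h
      exact hTsum.comp_injective this
    have hKe : KMKZ n (fun u => (u.1 - x1) ^ 2) (x1, x2)
        = ∑' k1, ∑' k2, Tt n x1 x2 (k1, k2) := rfl
    rw [hKe, ← Summable.tsum_prod' hTsum hfib]
    exact hTle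
  · obtain ⟨hT2sum, hT2le⟩ := core n hn hx2 hx1 (by linarith)
    have hWsum : Summable (fun k : ℕ × ℕ => Tt n x2 x1 (k.2, k.1)) := by
      exact hT2sum.comp_injective Prod.swap_injective
    have hWfib : ∀ k1, Summable fun k2 => Tt n x2 x1 (k2, k1) := by
      intro k1
      have : Function.Injective (fun k2 : ℕ => ((k2, k1) : ℕ × ℕ)) := by
        intro a b h; simpa using h
      exact hT2sum.comp_injective this
    have hbody : ∀ k1 k2 : ℕ, ptil n k1 k2 (x1, x2) * cMKZ n k1 k2 *
        (∫ u in triRect n k1 k2, (u.2 - x2) ^ 2) = Tt n x2 x1 (k2, k1) := by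
      intro k1 k2
      simp only [Tt]
      rw [ptil_swap n k1 k2 x1 x2, cMKZ_swap n k1 k2, triRect_swap n k1 k2 x2]
    have hKe2 : KMKZ n (fun u => (u.2 - x2) ^ 2) (x1, x2)
        = ∑' k1, ∑' k2, Tt n x2 x1 (k2, k1) := by
      simp only [KMKZ]
      exact tsum_congr fun k1 => tsum_congr fun k2 => hbody k1 k2
    have hswap : (∑' k : ℕ × ℕ, Tt n x2 x1 (k.2, k.1)) = ∑' k, Tt n x2 x1 k := by
      exact Equiv.tsum_eq (Equiv.prodComm ℕ ℕ) (Tt n x2 x1)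
    rw [hKe2, ← Summable.tsum_prod' hWsum hWfib]
    calc (∑' k : ℕ × ℕ, Tt n x2 x1 (k.2, k.1)) = ∑' k, Tt n x2 x1 k := hswap
      _ ≤ 4 / n := hT2le
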